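/- Let t(β) = 1 − β − (1/(2e))·(log β)². Then t is strictly decreasing on (e^{−1}, ∞); for every ε > 0 there is a unique β(ε) > e^{−1} with t(β(ε)) = 1 − 3/(2e) − ε; and as ε → 0+ one has the expansion β(ε) = e^{−1} + e^{−1/2}·ε^{1/2} + (5/12)·ε + O(ε^{3/2}). -/

import Mathlib

set_option maxHeartbeats 1000000

open Real Filter Set Topology Asymptotics



lemma KS_logT (u : ℝ) (hu : 0 < u) (hu2 : u ≤ 1/2) :
    |Real.log (1+u) - (u - u^2/2 + u^3/3)| ≤ 2*u^4 := by
  have h := Real.abs_log_sub_add_sum_range_le (x := -u) (by rw [abs_neg, abs_of_pos hu]; linarith) 3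
  rw [abs_neg, abs_of_pos hu] at h
  simp [Finset.sum_range_succ] at h
  have h4 : u^4/(1-u) ≤ 2*u^4 := by
    rw [div_le_iff₀ (by linarith)]
    nlinarith [pow_pos hu 4]
  calc |Real.log (1+u) - (u - u^2/2 + u^3/3)|
      = |(-u + (-u)^2/2 + (-u)^3/3) + Real.log (1 - (-u))| := by ring_nf
    _ ≤ u^4/(1-u) := by convert h using 2; ring_nf
    _ ≤ 2*u^4 := h4

lemma KS_Gbound (u : ℝ) (hu : 0 < u) (hu2 : u ≤ 1/2) :
    |(Real.log (1+u))^2 - 2*Real.log (1+u) + 2*u - 2*u^2 + 5/3*u^3| ≤ 20*u^4 := by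
  set L := Real.log (1+u) with hL
  set p := u - u^2/2 + u^3/3 with hp
  have hr : |L - p| ≤ 2*u^4 := KS_logT u hu hu2
  have hu4 : (0:ℝ) < u^4 := pow_pos hu 4
  have hrabs := abs_le.1 hr
  have hu2' : u*u ≤ u*(1/2) := mul_le_mul_of_nonneg_left hu2 hu.le
  have hu3' : u^2*u ≤ u^2*(1/2) := mul_le_mul_of_nonneg_left hu2 (sq_nonneg u)
  have hu4' : u^4 ≤ (1/2:ℝ)^4 := pow_le_pow_left₀ hu.le hu2 4
  have hpb : |p| ≤ u := by
    rw [abs_le, hp]; constructor <;> nlinarith [pow_pos hu 3]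
  have hpabs := abs_le.1 hpb
  have key : L^2 - 2*L + 2*u - 2*u^2 + 5/3*u^3
      = (11/12*u^4 - 1/3*u^5 + 1/9*u^6) + (L - p)*(2*p + (L-p) - 2) := by ring
  rw [key]
  have h1 : |11/12*u^4 - 1/3*u^5 + 1/9*u^6| ≤ 2*u^4 := by
    rw [abs_le]; constructor <;> nlinarith [pow_pos hu 5, pow_pos hu 6]
  have h2 : |(L - p)*(2*p + (L-p) - 2)| ≤ 2*u^4 * 4 := by
    rw [abs_mul]
    apply mul_le_mul hr _ (abs_nonneg _) (by positivity)
    rw [abs_le]; constructor <;> nlinarith [hrabs.1, hrabs.2, hpabs.1, hpabs.2]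
  calc |(11/12*u^4 - 1/3*u^5 + 1/9*u^6) + (L - p)*(2*p + (L-p) - 2)|
      ≤ |11/12*u^4 - 1/3*u^5 + 1/9*u^6| + |(L - p)*(2*p + (L-p) - 2)| := abs_add_le _ _
    _ ≤ 2*u^4 + 2*u^4*4 := add_le_add h1 h2
    _ ≤ 20*u^4 := by nlinarith

lemma KS_core (δ : ℝ) (hδ : 0 < δ) (hδ2 : Real.exp 1 * δ ≤ 1/2) :
    |(δ + ((Real.log ((Real.exp 1)⁻¹ + δ))^2 - 1)/(2*Real.exp 1))
      - (Real.exp 1*δ^2 - 5/6*(Real.exp 1)^2*δ^3)| ≤ 10*(Real.exp 1)^3*δ^4 := by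
  set e := Real.exp 1 with he
  have hepos : (0:ℝ) < e := Real.exp_pos 1
  set u := e * δ with hu
  have hupos : 0 < u := by positivity
  have hlog : Real.log (e⁻¹ + δ) = -1 + Real.log (1+u) := by
    have : e⁻¹ + δ = e⁻¹ * (1 + u) := by field_simp; ring
    rw [this, Real.log_mul (by positivity) (by positivity), Real.log_inv, Real.log_exp]
  rw [hlog]
  set L := Real.log (1+u) with hL
  have hG := KS_Gbound u hupos hδ2
  have key : (δ + ((-1 + L)^2 - 1)/(2*e)) - (e*δ^2 - 5/6*e^2*δ^3)
      = (L^2 - 2*L + 2*u - 2*u^2 + 5/3*u^3) / (2*e) := by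
    rw [hu]; field_simp; ring
  rw [key, abs_div, abs_of_pos (by positivity : (0:ℝ) < 2*e)]
  rw [div_le_iff₀ (by positivity)]
  calc |L^2 - 2*L + 2*u - 2*u^2 + 5/3*u^3| ≤ 20*u^4 := hG
    _ = 10*e^3*δ^4 * (2*e) := by rw [hu]; ring

lemma KS_contOn (t : ℝ → ℝ)
    (ht : ∀ β : ℝ, t β = 1 - β - 1 / (2 * Real.exp 1) * (Real.log β) ^ 2)
    {s : Set ℝ} (hs : ∀ x ∈ s, x ≠ 0) : ContinuousOn t s := by
  have : ContinuousOn (fun β : ℝ => 1 - β - 1 / (2 * Real.exp 1) * (Real.log β) ^ 2) s := by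
    apply ContinuousOn.sub
    · exact (continuous_const.sub continuous_id).continuousOn
    · exact continuousOn_const.mul ((Real.continuousOn_log.mono (fun x hx => hs x hx)).pow 2)
  exact this.congr (fun x _ => ht x)

lemma KS_antiOn (t : ℝ → ℝ)
    (ht : ∀ β : ℝ, t β = 1 - β - 1 / (2 * Real.exp 1) * (Real.log β) ^ 2) :
    StrictAntiOn t (Set.Ioi (Real.exp 1)⁻¹) := by
  have he : (0:ℝ) < Real.exp 1 := Real.exp_pos 1
  have hinv : (0:ℝ) < (Real.exp 1)⁻¹ := by positivity
  apply strictAntiOn_of_deriv_neg (convex_Ioi _)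
  · exact KS_contOn t ht (fun x hx => ne_of_gt (lt_trans hinv hx))
  · intro x hx
    rw [interior_Ioi] at hx
    have hx0 : (0:ℝ) < x := lt_trans hinv hx
    have hd : HasDerivAt t (-1 - 1/(2*Real.exp 1) * (2 * Real.log x * x⁻¹)) x := by
      have h1 : HasDerivAt (fun β : ℝ => 1 - β - 1 / (2 * Real.exp 1) * (Real.log β) ^ 2)
          (-1 - 1/(2*Real.exp 1) * (2 * Real.log x * x⁻¹)) x := by
        have hlog : HasDerivAt Real.log x⁻¹ x := Real.hasDerivAt_log (ne_of_gt hx0)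
        have hsq : HasDerivAt (fun β : ℝ => (Real.log β)^2) (2 * Real.log x * x⁻¹) x := by
          have := (hlog.pow 2)
          exact this.congr_deriv (by ring)
        have := ((hasDerivAt_const x (1:ℝ)).sub (hasDerivAt_id x)).sub
          ((hasDerivAt_const x (1/(2*Real.exp 1))).mul hsq)
        exact this.congr_deriv (by ring)
      have htfun : t = fun β : ℝ => 1 - β - 1 / (2 * Real.exp 1) * (Real.log β) ^ 2 :=
        funext ht
      rw [htfun]; exact h1
    rw [hd.deriv]
    have hlogx : -1 < Real.log x := by
      have := Real.log_lt_log hinv hx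
      rwa [Real.log_inv, Real.log_exp] at this
    have hx' : (Real.exp 1)⁻¹ < x := hx
    have hex : 1 < Real.exp 1 * x := by
      have := (mul_lt_mul_iff_right₀ he).2 hx'
      rwa [mul_inv_cancel₀ (ne_of_gt he)] at this
    have h1 : -(Real.exp 1 * x) < Real.log x := by nlinarith
    have hxinv : (0:ℝ) < x⁻¹ := by positivity
    have h3 : -(Real.exp 1) < Real.log x * x⁻¹ := by
      have := mul_lt_mul_of_pos_right h1 hxinv
      have hxx : x * x⁻¹ = 1 := mul_inv_cancel₀ (ne_of_gt hx0)
      nlinarith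
    have heq : -1 - 1/(2*Real.exp 1) * (2 * Real.log x * x⁻¹)
        = -1 - (Real.log x * x⁻¹)/Real.exp 1 := by
      field_simp
    rw [heq, sub_neg, neg_lt, ← neg_div]
    rw [div_lt_iff₀ he]
    nlinarith

lemma KS_tinv (t : ℝ → ℝ)
    (ht : ∀ β : ℝ, t β = 1 - β - 1 / (2 * Real.exp 1) * (Real.log β) ^ 2) :
    t (Real.exp 1)⁻¹ = 1 - 3 / (2 * Real.exp 1) := by
  rw [ht, Real.log_inv, Real.log_exp]
  have he : (0:ℝ) < Real.exp 1 := Real.exp_pos 1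
  field_simp; ring

lemma KS_existsUnique (t : ℝ → ℝ)
    (ht : ∀ β : ℝ, t β = 1 - β - 1 / (2 * Real.exp 1) * (Real.log β) ^ 2)
    (ε : ℝ) (hε : 0 < ε) :
    ∃! β : ℝ, (Real.exp 1)⁻¹ < β ∧ t β = 1 - 3 / (2 * Real.exp 1) - ε := by
  have he : (0:ℝ) < Real.exp 1 := Real.exp_pos 1
  have hinv : (0:ℝ) < (Real.exp 1)⁻¹ := by positivity
  set a := (Real.exp 1)⁻¹
  set target := 1 - 3 / (2 * Real.exp 1) - ε with htarget
  set M := max (a + 1) (3 / (2 * Real.exp 1) + ε) with hM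
  have haM : a ≤ M := le_trans (by linarith) (le_max_left _ _)
  have hMbig : 3 / (2 * Real.exp 1) + ε ≤ M := le_max_right _ _
  have hta : t a = 1 - 3 / (2 * Real.exp 1) := KS_tinv t ht
  have htM : t M ≤ target := by
    rw [ht, htarget]
    have hsq : 0 ≤ 1 / (2 * Real.exp 1) * (Real.log M) ^ 2 := by positivity
    linarith
  have hcont : ContinuousOn t (Icc a M) :=
    KS_contOn t ht (fun x hx => ne_of_gt (lt_of_lt_of_le hinv hx.1))
  have hmem : target ∈ Icc (t M) (t a) := ⟨htM, by rw [hta]; linarith⟩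
  obtain ⟨β, hβmem, hβ⟩ := intermediate_value_Icc' haM hcont hmem
  have hβa : a < β := by
    rcases lt_or_eq_of_le hβmem.1 with h | h
    · exact h
    · exfalso; rw [← h] at hβ; rw [hta] at hβ; linarith
  refine ⟨β, ⟨hβa, hβ⟩, ?_⟩
  rintro γ ⟨hγa, hγ⟩
  exact (KS_antiOn t ht).injOn hγa hβa (by rw [hγ, hβ])

lemma KS_bracket_plus (s q w : ℝ) (hs : 0 < s) (hs1 : s ≤ 1/100)
    (hq1 : 1.6 ≤ q) (hq2 : q ≤ 1.65)
    (hw : w = s + 5/12*q*s^2 + 50*q*s^3) :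
    s^2 ≤ w^2 - 5/6*q*w^3 - 10*q^2*w^4 := by
  have hq0 : (0:ℝ) < q := by linarith
  have f1 : s^5 ≤ s^4 * (1/100)^1 :=
    mul_le_mul_of_nonneg_left (by simpa using pow_le_pow_left₀ hs.le hs1 1) (pow_nonneg hs.le 4)
    |>.trans_eq' (by ring)
  have f2 : s^6 ≤ s^4 * (1/100)^2 :=
    mul_le_mul_of_nonneg_left (pow_le_pow_left₀ hs.le hs1 2) (pow_nonneg hs.le 4)
    |>.trans_eq' (by ring)
  have e2 : s^2 ≤ s*(1/100) := by nlinarith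
  have e3 : s^3 ≤ s^2*(1/100) := by nlinarith [sq_nonneg s]
  have hqq : q^2 ≤ 1.65*q := by nlinarith
  have hqs3 : q*s^3 ≤ 1.65*(s^2*(1/100)) := by
    nlinarith [mul_le_mul_of_nonneg_right hq2 (pow_nonneg hs.le 3)]
  have hqs2 : q*s^2 ≤ 1.65*s^2 := mul_le_mul_of_nonneg_right hq2 (sq_nonneg s)
  have hwpos : 0 < w := by rw [hw]; positivity
  have hup : w ≤ s + 1.6*s^2 := by rw [hw]; nlinarith
  have hup2 : w ≤ 1.02*s := by nlinarith
  have hw2 : w^2 = (s + 5/12*q*s^2 + 50*q*s^3)^2 := by rw [hw]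
  have h2 : s^2 + 5/6*q*s^3 + 100*q*s^4 ≤ w^2 := by
    nlinarith [hw2, sq_nonneg (5/12*q*s^2 + 50*q*s^3)]
  have h3 : w^3 ≤ s^3 + 5*s^4 := by
    have hcube := pow_le_pow_left₀ hwpos.le hup 3
    have expand : (s + 1.6*s^2)^3 ≤ s^3 + 5*s^4 := by nlinarith [f1, f2]
    linarith
  have h4 : w^4 ≤ 1.1*s^4 := by
    have hq4 := pow_le_pow_left₀ hwpos.le hup2 4
    nlinarith [pow_pos hs 4]
  have h3' : 5/6*q*w^3 ≤ 5/6*q*(s^3 + 5*s^4) :=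
    mul_le_mul_of_nonneg_left h3 (by positivity)
  have h4' : 10*q^2*w^4 ≤ 10*q^2*(1.1*s^4) :=
    mul_le_mul_of_nonneg_left h4 (by positivity)
  have m1 : q^2*s^4 ≤ 1.65*(q*s^4) := by
    nlinarith [mul_le_mul_of_nonneg_right hqq (pow_nonneg hs.le 4)]
  have qs4 : 0 < q*s^4 := by positivity
  nlinarith [h2, h3', h4', m1, qs4]

lemma KS_bracket_minus (s q w : ℝ) (hs : 0 < s) (hs1 : s ≤ 1/100)
    (hq1 : 1.6 ≤ q) (hq2 : q ≤ 1.65)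
    (hw : w = s + 5/12*q*s^2 - 50*q*s^3) :
    w^2 - 5/6*q*w^3 + 10*q^2*w^4 ≤ s^2 := by
  have hq0 : (0:ℝ) < q := by linarith
  have f1 : s^5 ≤ s^4 * (1/100)^1 :=
    mul_le_mul_of_nonneg_left (by simpa using pow_le_pow_left₀ hs.le hs1 1) (pow_nonneg hs.le 4)
    |>.trans_eq' (by ring)
  have f2 : s^6 ≤ s^4 * (1/100)^2 :=
    mul_le_mul_of_nonneg_left (pow_le_pow_left₀ hs.le hs1 2) (pow_nonneg hs.le 4)
    |>.trans_eq' (by ring)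
  have f5 : s^9 ≤ s^4 * (1/100)^5 :=
    mul_le_mul_of_nonneg_left (pow_le_pow_left₀ hs.le hs1 5) (pow_nonneg hs.le 4)
    |>.trans_eq' (by ring)
  have f3 : s^7 ≤ s^4 * (1/100)^3 :=
    mul_le_mul_of_nonneg_left (pow_le_pow_left₀ hs.le hs1 3) (pow_nonneg hs.le 4)
    |>.trans_eq' (by ring)
  have e2 : s^2 ≤ s*(1/100) := by nlinarith
  have e3 : s^3 ≤ s^2*(1/100) := by nlinarith [sq_nonneg s]
  have e3' : s^3 ≤ s*(1/10000) := by nlinarith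
  have hqq : q^2 ≤ 1.65*q := by nlinarith
  have hqs3 : q*s^3 ≤ 1.65*s^3 := mul_le_mul_of_nonneg_right hq2 (pow_nonneg hs.le 3)
  have hqs2 : q*s^2 ≤ 1.65*s^2 := mul_le_mul_of_nonneg_right hq2 (sq_nonneg s)
  have hlow : 0.99*s ≤ w := by
    rw [hw]; nlinarith [mul_nonneg hq0.le (sq_nonneg s)]
  have hwpos : 0 < w := by nlinarith
  have hup2 : w ≤ 1.02*s := by rw [hw]; nlinarith [mul_nonneg hq0.le (pow_nonneg hs.le 3)]
  have hw2 : w^2 = (s + 5/12*q*s^2 - 50*q*s^3)^2 := by rw [hw]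
  have m1 : q^2*s^4 ≤ 1.65*(q*s^4) := by
    nlinarith [mul_le_mul_of_nonneg_right hqq (pow_nonneg hs.le 4)]
  have m2 : q^2*s^6 ≤ 1.65*(q*s^6) := by
    nlinarith [mul_le_mul_of_nonneg_right hqq (pow_nonneg hs.le 6)]
  have f2q : q*s^6 ≤ q*(s^4*(1/100)^2) := mul_le_mul_of_nonneg_left f2 hq0.le
  have hsq : (5/12*q*s^2 - 50*q*s^3)^2 ≤ 2*q*s^4 := by
    nlinarith [m1, m2, f2q, mul_nonneg (mul_nonneg (sq_nonneg q) (pow_nonneg hs.le 5)) (le_of_lt hq0),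
      mul_nonneg (sq_nonneg q) (pow_nonneg hs.le 5), mul_pos hq0 (pow_pos hs 4)]
  have h2 : w^2 ≤ s^2 + 5/6*q*s^3 - 100*q*s^4 + 2*q*s^4 := by nlinarith [hw2, hsq]
  have hlb : s - 82.5*s^3 ≤ w := by
    rw [hw]; nlinarith [mul_nonneg hq0.le (sq_nonneg s)]
  have hlbpos : 0 < s - 82.5*s^3 := by nlinarith
  have h3 : s^3 - 2.5*s^4 ≤ w^3 := by
    have hcube := pow_le_pow_left₀ hlbpos.le hlb 3
    have expand : s^3 - 2.5*s^4 ≤ (s - 82.5*s^3)^3 := by nlinarith [f1, f5, f3]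
    linarith
  have h4 : w^4 ≤ 1.1*s^4 := by
    have hq4 := pow_le_pow_left₀ hwpos.le hup2 4
    nlinarith [pow_pos hs 4]
  have h3' : 5/6*q*(s^3 - 2.5*s^4) ≤ 5/6*q*w^3 :=
    mul_le_mul_of_nonneg_left h3 (by positivity)
  have h4' : 10*q^2*w^4 ≤ 10*q^2*(1.1*s^4) :=
    mul_le_mul_of_nonneg_left h4 (by positivity)
  have qs4 : 0 < q*s^4 := by positivity
  nlinarith [h2, h3', h4', m1, qs4]

lemma KS_part3 (t : ℝ → ℝ)
    (ht : ∀ β : ℝ, t β = 1 - β - 1 / (2 * Real.exp 1) * (Real.log β) ^ 2)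
    (B : ℝ → ℝ)
    (hB : ∀ ε : ℝ, 0 < ε →
        (Real.exp 1)⁻¹ < B ε ∧ t (B ε) = 1 - 3 / (2 * Real.exp 1) - ε) :
    (fun ε : ℝ =>
        B ε - ((Real.exp 1)⁻¹ + Real.exp (-(1 / 2)) * Real.sqrt ε + 5 / 12 * ε))
      =O[𝓝[>] (0 : ℝ)] (fun ε : ℝ => ε * Real.sqrt ε) := by
  have hE : (0:ℝ) < Real.exp 1 := Real.exp_pos 1
  set q : ℝ := Real.sqrt (Real.exp 1) with hqdef
  have hq0 : 0 < q := Real.sqrt_pos.2 hE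
  have hqsq : q^2 = Real.exp 1 := Real.sq_sqrt hE.le
  have hq1 : 1.6 ≤ q := by nlinarith [Real.exp_one_gt_d9]
  have hq2 : q ≤ 1.65 := by nlinarith [Real.exp_one_lt_d9]
  have hhalf : Real.exp (-(1/2:ℝ)) = q⁻¹ := by
    have h2 : Real.exp (1/2:ℝ) = q := by
      have : Real.exp 1 = (Real.exp (1/2:ℝ))^2 := by
        rw [sq, ← Real.exp_add]; norm_num
      rw [hqdef, this, Real.sqrt_sq (Real.exp_pos _).le]
    rw [Real.exp_neg, h2]
  rw [Asymptotics.isBigO_iff]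
  refine ⟨50, ?_⟩
  filter_upwards [Ioo_mem_nhdsGT_of_mem (show (0:ℝ) ∈ Ico 0 (1/10000) by constructor <;> norm_num)]
    with ε hεmem
  obtain ⟨hε0, hε1⟩ := hεmem
  set s : ℝ := Real.sqrt ε with hsdef
  have hs : 0 < s := Real.sqrt_pos.2 hε0
  have hs2 : s^2 = ε := Real.sq_sqrt hε0.le
  have hs1 : s ≤ 1/100 := by nlinarith
  -- delta plus / minus
  set δp : ℝ := s/q + 5/12*s^2 + 50*s^3 with hδpdef
  set δm : ℝ := s/q + 5/12*s^2 - 50*s^3 with hδmdef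
  have hδppos : 0 < δp := by rw [hδpdef]; positivity
  have hwp : q*δp = s + 5/12*q*s^2 + 50*q*s^3 := by
    rw [hδpdef]; field_simp
  have hwm : q*δm = s + 5/12*q*s^2 - 50*q*s^3 := by
    rw [hδmdef]; field_simp
  have hwple : q*δp ≤ 1.02*s := by
    rw [hwp]
    nlinarith [mul_le_mul_of_nonneg_right hq2 (sq_nonneg s),
      mul_le_mul_of_nonneg_right hq2 (pow_nonneg hs.le 3), sq_nonneg s, pow_pos hs 3,
      mul_le_mul_of_nonneg_left hs1 hs.le,
      mul_le_mul_of_nonneg_left hs1 (sq_nonneg s)]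
  have hδmpos : 0 < δm := by
    have : 50*s^3 ≤ s/q * 1 := by
      rw [div_mul_eq_mul_div, le_div_iff₀ hq0]
      nlinarith [mul_le_mul_of_nonneg_left hs1 hs.le, mul_le_mul_of_nonneg_left hs1 (sq_nonneg s),
        pow_nonneg hs.le 3]
    have hpos2 : 0 < s/q := by positivity
    rw [hδmdef]; nlinarith [sq_nonneg s]
  have hδmle : δm ≤ δp := by rw [hδpdef, hδmdef]; nlinarith [pow_pos hs 3]
  have hEδp : Real.exp 1 * δp ≤ 1/2 := by
    have : Real.exp 1 * δp = q * (q * δp) := by rw [← hqsq]; ring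
    rw [this]
    nlinarith [mul_le_mul_of_nonneg_left hwple hq0.le]
  have hEδm : Real.exp 1 * δm ≤ 1/2 := by
    have h := mul_le_mul_of_nonneg_left hδmle hE.le
    exact h.trans hEδp
  -- convert bracket inequalities
  have hBp := KS_bracket_plus s q (q*δp) hs hs1 hq1 hq2 hwp
  have hBm := KS_bracket_minus s q (q*δm) hs hs1 hq1 hq2 hwm
  have hPp : ε ≤ Real.exp 1*δp^2 - 5/6*(Real.exp 1)^2*δp^3 - 10*(Real.exp 1)^3*δp^4 := by
    have : (q*δp)^2 - 5/6*q*(q*δp)^3 - 10*q^2*(q*δp)^4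
        = Real.exp 1*δp^2 - 5/6*(Real.exp 1)^2*δp^3 - 10*(Real.exp 1)^3*δp^4 := by
      rw [← hqsq]; ring
    rw [← hs2]; linarith [hBp, this.symm.le, this.le]
  have hPm : Real.exp 1*δm^2 - 5/6*(Real.exp 1)^2*δm^3 + 10*(Real.exp 1)^3*δm^4 ≤ ε := by
    have : (q*δm)^2 - 5/6*q*(q*δm)^3 + 10*q^2*(q*δm)^4
        = Real.exp 1*δm^2 - 5/6*(Real.exp 1)^2*δm^3 + 10*(Real.exp 1)^3*δm^4 := by
      rw [← hqsq]; ring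
    rw [← hs2]; linarith [hBm, this.le]
  -- the X function identity
  have hX : ∀ δ : ℝ, 1 - 3/(2*Real.exp 1) - t ((Real.exp 1)⁻¹ + δ)
      = δ + ((Real.log ((Real.exp 1)⁻¹ + δ))^2 - 1)/(2*Real.exp 1) := by
    intro δ
    rw [ht]
    field_simp
    ring
  -- t bounds at bracket points
  have hcp := KS_core δp hδppos hEδp
  have hcm := KS_core δm hδmpos hEδm
  have htp : t ((Real.exp 1)⁻¹ + δp) ≤ 1 - 3/(2*Real.exp 1) - ε := by
    have h1 := (abs_le.1 hcp).1
    have h2 := hX δp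
    linarith [hPp]
  have htm : 1 - 3/(2*Real.exp 1) - ε ≤ t ((Real.exp 1)⁻¹ + δm) := by
    have h1 := (abs_le.1 hcm).2
    have h2 := hX δm
    linarith [hPm]
  -- bracket B ε
  obtain ⟨hBgt, hBeq⟩ := hB ε hε0
  have hanti := KS_antiOn t ht
  have hub : B ε ≤ (Real.exp 1)⁻¹ + δp := by
    by_contra h
    push_neg at h
    have hmem1 : (Real.exp 1)⁻¹ + δp ∈ Set.Ioi (Real.exp 1)⁻¹ := by
      simp [Set.mem_Ioi]; linarith
    have hmem2 : B ε ∈ Set.Ioi (Real.exp 1)⁻¹ := hBgt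
    have := hanti hmem1 hmem2 h
    rw [hBeq] at this
    linarith
  have hlb : (Real.exp 1)⁻¹ + δm ≤ B ε := by
    by_contra h
    push_neg at h
    have hmem1 : (Real.exp 1)⁻¹ + δm ∈ Set.Ioi (Real.exp 1)⁻¹ := by
      simp [Set.mem_Ioi]; linarith
    have hmem2 : B ε ∈ Set.Ioi (Real.exp 1)⁻¹ := hBgt
    have := hanti hmem2 hmem1 h
    rw [hBeq] at this
    linarith
  -- conclude
  have hcenter : (Real.exp 1)⁻¹ + Real.exp (-(1/2:ℝ)) * Real.sqrt ε + 5/12 * ε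
      = (Real.exp 1)⁻¹ + (s/q + 5/12*s^2) := by
    rw [hhalf, ← hsdef, ← hs2]
    field_simp
    ring
  have habs : |B ε - ((Real.exp 1)⁻¹ + Real.exp (-(1/2:ℝ)) * Real.sqrt ε + 5/12 * ε)| ≤ 50*s^3 := by
    rw [hcenter, abs_le]
    constructor
    · rw [hδmdef] at hlb; linarith
    · rw [hδpdef] at hub; linarith
  have hnorm : ‖ε * Real.sqrt ε‖ = s^3 := by
    rw [Real.norm_eq_abs, abs_of_nonneg (by positivity), ← hsdef, ← hs2]; ring
  rw [Real.norm_eq_abs, hnorm]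
  linarith [habs]


/-- For `t β = 1 - β - (1/(2e)) (log β)²`: `t` is strictly decreasing
on `(e⁻¹, ∞)`; for every `ε > 0` there is a unique `β > e⁻¹` with
`t β = 1 - 3/(2e) - ε`; and any such solution function `B` satisfies
`B ε = e⁻¹ + e^{-1/2} √ε + (5/12) ε + O(ε^{3/2})` as `ε → 0⁺`. -/
theorem karpSipser_beta_expansion (t : ℝ → ℝ)
    (ht : ∀ β : ℝ, t β = 1 - β - 1 / (2 * Real.exp 1) * (Real.log β) ^ 2) :
    StrictAntiOn t (Set.Ioi (Real.exp 1)⁻¹) ∧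
    (∀ ε : ℝ, 0 < ε →
      ∃! β : ℝ, (Real.exp 1)⁻¹ < β ∧ t β = 1 - 3 / (2 * Real.exp 1) - ε) ∧
    (∀ B : ℝ → ℝ,
      (∀ ε : ℝ, 0 < ε →
        (Real.exp 1)⁻¹ < B ε ∧ t (B ε) = 1 - 3 / (2 * Real.exp 1) - ε) →
      (fun ε : ℝ =>
          B ε - ((Real.exp 1)⁻¹ + Real.exp (-(1 / 2)) * Real.sqrt ε + 5 / 12 * ε))
        =O[𝓝[>] (0 : ℝ)] (fun ε : ℝ => ε * Real.sqrt ε)) :=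
  ⟨KS_antiOn t ht, fun ε hε => KS_existsUnique t ht ε hε,
    fun B hB => KS_part3 t ht B hB⟩
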